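/- arXiv:2309.01300 — 2 statements merged into one kernel-verified Lean document; each statement's English description precedes it below -/
import Mathlib

section
/- Let ψ be a critical branching mechanism (ψ'(0+) = 0) satisfying ∫^∞ 1/ψ < ∞, φ(λ) = ∫_λ^∞ 1/ψ(u) du with inverse φ̂. Then for every λ > 0, lim_{t→∞} [φ̂(t) - φ̂(t + φ(λ))] / ψ(φ̂(t)) = φ(λ). -/
open MeasureTheory Set Filter

/-- A branching mechanism given by the Lévy–Khintchine formula. -/
def LevyMechanism (α σ : ℝ) (π : Measure ℝ) (ψ : ℝ → ℝ) : Prop :=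
  0 ≤ σ ∧
  Integrable (fun r => min r (r ^ 2)) (π.restrict (Set.Ioi 0)) ∧
  ∀ l : ℝ, ψ l = α * l + σ ^ 2 / 2 * l ^ 2 +
      ∫ r in Set.Ioi 0, (Real.exp (-l * r) - 1 + l * r) ∂π

section Helpers
variable {σ : ℝ} {π : MeasureTheory.Measure ℝ} {ψ φ : ℝ → ℝ}

lemma pexp_nonneg (x : ℝ) : 0 ≤ Real.exp (-x) - 1 + x := by
  have := Real.add_one_le_exp (-x); linarith

lemma pexp_le {x : ℝ} (hx : 0 ≤ x) : Real.exp (-x) - 1 + x ≤ min x (x ^ 2) := by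
  rcases le_or_gt x 1 with h | h
  · have h2 : |Real.exp (-x) - 1 - (-x)| ≤ x ^ 2 := by
      have := Real.abs_exp_sub_one_sub_id_le (x := -x) (by rw [abs_neg, abs_of_nonneg hx]; exact h)
      simpa [sq, abs_neg] using this
    have h3 : Real.exp (-x) - 1 + x ≤ x ^ 2 := by
      have := abs_le.1 h2; linarith [this.2]
    have h4 : Real.exp (-x) ≤ 1 := Real.exp_le_one_iff.2 (by linarith)
    exact le_min (by linarith) h3
  · have h4 : Real.exp (-x) ≤ 1 := Real.exp_le_one_iff.2 (by linarith)
    exact le_min (by linarith) (by nlinarith)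

lemma pexp_bound {l r : ℝ} (hl : 0 ≤ l) (hr : 0 < r) :
    Real.exp (-l * r) - 1 + l * r ≤ (l + l ^ 2) * min r (r ^ 2) := by
  have hlr : 0 ≤ l * r := mul_nonneg hl hr.le
  have h := pexp_le hlr
  rcases le_or_gt r 1 with h1 | h1
  · have : min r (r ^ 2) = r ^ 2 := min_eq_right (by nlinarith)
    rw [this]
    calc Real.exp (-l * r) - 1 + l * r = Real.exp (-(l*r)) - 1 + l*r := by ring_nf
      _ ≤ (l * r) ^ 2 := le_trans h (min_le_right _ _)
      _ = l ^ 2 * r ^ 2 := by ring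
      _ ≤ (l + l ^ 2) * r ^ 2 := by nlinarith
  · have : min r (r ^ 2) = r := min_eq_left (by nlinarith)
    rw [this]
    calc Real.exp (-l * r) - 1 + l * r = Real.exp (-(l*r)) - 1 + l*r := by ring_nf
      _ ≤ l * r := le_trans h (min_le_left _ _)
      _ ≤ (l + l ^ 2) * r := by nlinarith

lemma pexp_integrable {π : Measure ℝ} (hπ : Integrable (fun r => min r (r ^ 2)) (π.restrict (Set.Ioi 0)))
    {l : ℝ} (hl : 0 ≤ l) :
    Integrable (fun r => Real.exp (-l * r) - 1 + l * r) (π.restrict (Set.Ioi 0)) := by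
  refine (hπ.const_mul (l + l ^ 2)).mono ?_ ?_
  · exact (((Real.continuous_exp.comp (continuous_const.mul continuous_id)).sub continuous_const).add
      (continuous_const.mul continuous_id)).aestronglyMeasurable
  · refine (ae_restrict_iff' measurableSet_Ioi).2 (ae_of_all _ fun r hr => ?_)
    have hr' : (0:ℝ) < r := hr
    have h0 := pexp_nonneg (l * r)
    have h1 := pexp_bound hl hr'
    rw [Real.norm_eq_abs, Real.norm_eq_abs, abs_of_nonneg (by simpa [neg_mul] using h0)]
    have hmin : 0 ≤ min r (r ^ 2) := le_min hr'.le (sq_nonneg r)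
    rw [abs_of_nonneg (mul_nonneg (by nlinarith) hmin)]
    simpa [neg_mul] using h1

lemma F_convex{π : Measure ℝ} (hπ : Integrable (fun r => min r (r ^ 2)) (π.restrict (Set.Ioi 0))) :
    ConvexOn ℝ (Set.Ici 0) (fun l => ∫ r in Set.Ioi 0, (Real.exp (-l * r) - 1 + l * r) ∂π) := by
  refine ⟨convex_Ici 0, fun x hx y hy a b ha hb hab => ?_⟩
  simp only [smul_eq_mul]
  have hx0 : (0:ℝ) ≤ x := hx
  have hy0 : (0:ℝ) ≤ y := hy
  have hm0 : (0:ℝ) ≤ a * x + b * y := by nlinarith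
  have key : ∀ r ∈ Set.Ioi (0:ℝ),
      Real.exp (-(a * x + b * y) * r) - 1 + (a * x + b * y) * r ≤
        a * (Real.exp (-x * r) - 1 + x * r) + b * (Real.exp (-y * r) - 1 + y * r) := by
    intro r _
    have hconv := convexOn_exp.2 (Set.mem_univ (-x * r)) (Set.mem_univ (-y * r)) ha hb hab
    simp only [smul_eq_mul] at hconv
    have : a * (-x * r) + b * (-y * r) = -(a * x + b * y) * r := by ring
    rw [this] at hconv
    nlinarith [hconv]
  have hi1 := pexp_integrable hπ hx0
  have hi2 := pexp_integrable hπ hy0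
  have him := pexp_integrable hπ hm0
  calc ∫ r in Set.Ioi 0, (Real.exp (-(a * x + b * y) * r) - 1 + (a * x + b * y) * r) ∂π
      ≤ ∫ r in Set.Ioi 0, (a * (Real.exp (-x * r) - 1 + x * r) + b * (Real.exp (-y * r) - 1 + y * r)) ∂π := by
        refine setIntegral_mono_on him ((hi1.const_mul a).add (hi2.const_mul b)) measurableSet_Ioi key
    _ = a * ∫ r in Set.Ioi 0, (Real.exp (-x * r) - 1 + x * r) ∂π
        + b * ∫ r in Set.Ioi 0, (Real.exp (-y * r) - 1 + y * r) ∂π := by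
        rw [integral_add (hi1.const_mul a) (hi2.const_mul b), integral_const_mul, integral_const_mul]

-- pointwise limit
lemma pexp_slope_tendsto (r : ℝ) :
    Tendsto (fun l => (Real.exp (-l * r) - 1 + l * r) / l) (nhdsWithin 0 (Set.Ioi 0)) (nhds 0) := by
  have h1 : HasDerivAt (fun u : ℝ => -u * r) (-r) 0 := by
    simpa using ((hasDerivAt_id (0:ℝ)).neg.mul_const r)
  have h2 : HasDerivAt (fun u : ℝ => Real.exp (-u * r)) (-r) 0 := by
    simpa using h1.exp
  have h3 : HasDerivAt (fun u : ℝ => u * r) r 0 := by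
    simpa using (hasDerivAt_id (0:ℝ)).mul_const r
  have h4 : HasDerivAt (fun u : ℝ => Real.exp (-u * r) - 1 + u * r) 0 0 := by
    have h4' := (h2.sub_const 1).add h3; rw [neg_add_cancel] at h4'; exact h4'
  have h5 := hasDerivAt_iff_tendsto_slope.1 h4
  have h6 : Tendsto (slope (fun u : ℝ => Real.exp (-u * r) - 1 + u * r) 0)
      (nhdsWithin 0 (Set.Ioi 0)) (nhds 0) :=
    h5.mono_left (nhdsWithin_mono _ (fun u hu => (ne_of_gt hu : u ≠ 0)))
  refine h6.congr' ?_
  filter_upwards [self_mem_nhdsWithin] with u hu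
  have hu0 : u ≠ 0 := ne_of_gt hu
  simp [slope_def_field, div_eq_iff hu0]

lemma psi_div_tendsto {σ : ℝ} {π : Measure ℝ} {ψ : ℝ → ℝ}
    (hπ : Integrable (fun r => min r (r ^ 2)) (π.restrict (Set.Ioi 0)))
    (hform : ∀ l : ℝ, ψ l = 0 * l + σ ^ 2 / 2 * l ^ 2 +
      ∫ r in Set.Ioi 0, (Real.exp (-l * r) - 1 + l * r) ∂π) :
    Tendsto (fun l => ψ l / l) (nhdsWithin 0 (Set.Ioi 0)) (nhds 0) := by
  have hI : Tendsto (fun l => ∫ r in Set.Ioi 0, ((Real.exp (-l * r) - 1 + l * r) / l) ∂π)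
      (nhdsWithin 0 (Set.Ioi 0)) (nhds (∫ _ in Set.Ioi 0, (0:ℝ) ∂π)) := by
    refine tendsto_integral_filter_of_dominated_convergence (fun r => min r (r ^ 2)) ?_ ?_ hπ ?_
    · filter_upwards with l
      exact ((((Real.continuous_exp.comp (continuous_const.mul continuous_id)).sub
        continuous_const).add (continuous_const.mul continuous_id)).div_const l).aestronglyMeasurable
    · have hev : ∀ᶠ l in nhdsWithin (0:ℝ) (Set.Ioi 0), l ∈ Set.Ioc (0:ℝ) 1 := by
        have h1 : ∀ᶠ l in nhdsWithin (0:ℝ) (Set.Ioi 0), l ≤ 1 := by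
          have : ∀ᶠ l in nhds (0:ℝ), l ≤ 1 := eventually_le_nhds (by norm_num)
          exact this.filter_mono nhdsWithin_le_nhds
        filter_upwards [h1, self_mem_nhdsWithin] with l h1 h2 using ⟨h2, h1⟩
      filter_upwards [hev] with l hl
      refine (ae_restrict_iff' measurableSet_Ioi).2 (ae_of_all _ fun r hr => ?_)
      have hr0 : (0:ℝ) < r := hr
      have hl0 : (0:ℝ) < l := hl.1
      have hg0 : 0 ≤ Real.exp (-l * r) - 1 + l * r := by
        simpa [neg_mul] using pexp_nonneg (l * r)
      have hgle : Real.exp (-l * r) - 1 + l * r ≤ min (l * r) ((l * r) ^ 2) := by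
        have := pexp_le (mul_nonneg hl0.le hr0.le)
        simpa [neg_mul] using this
      rw [Real.norm_eq_abs, abs_of_nonneg (div_nonneg hg0 hl0.le)]
      rw [div_le_iff₀ hl0]
      rcases le_or_gt r 1 with h1 | h1
      · have : min r (r ^ 2) = r ^ 2 := min_eq_right (by nlinarith)
        rw [this]
        have := le_trans hgle (min_le_right _ _)
        nlinarith [hl.2]
      · have : min r (r ^ 2) = r := min_eq_left (by nlinarith)
        rw [this]
        have := le_trans hgle (min_le_left _ _)
        nlinarith
    · refine (ae_restrict_iff' measurableSet_Ioi).2 (ae_of_all _ fun r hr => ?_)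
      exact pexp_slope_tendsto r
  have hI0 : Tendsto (fun l => ∫ r in Set.Ioi 0, ((Real.exp (-l * r) - 1 + l * r) / l) ∂π)
      (nhdsWithin 0 (Set.Ioi 0)) (nhds 0) := by simpa using hI
  have hlin : Tendsto (fun l : ℝ => σ ^ 2 / 2 * l) (nhdsWithin 0 (Set.Ioi 0)) (nhds 0) := by
    have : Tendsto (fun l : ℝ => σ ^ 2 / 2 * l) (nhds 0) (nhds (σ ^ 2 / 2 * 0)) :=
      (continuous_const.mul continuous_id).tendsto 0
    simpa using this.mono_left nhdsWithin_le_nhds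
  have := hlin.add hI0
  rw [add_zero] at this
  refine this.congr' ?_
  filter_upwards [self_mem_nhdsWithin] with l hl
  have hl0 : l ≠ 0 := ne_of_gt hl
  rw [hform l, integral_div]
  field_simp
  ring

lemma psi_convex (hπ : Integrable (fun r => min r (r ^ 2)) (π.restrict (Set.Ioi 0)))
    (hform : ∀ l : ℝ, ψ l = 0 * l + σ ^ 2 / 2 * l ^ 2 +
      ∫ r in Set.Ioi 0, (Real.exp (-l * r) - 1 + l * r) ∂π) :
    ConvexOn ℝ (Set.Ici 0) ψ := by
  have h1 : ConvexOn ℝ (Set.Ici (0:ℝ)) (fun l : ℝ => σ ^ 2 / 2 * l ^ 2) := by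
    exact (convexOn_pow 2).smul (c := σ ^ 2 / 2) (by positivity)
  have h3 := h1.add (F_convex hπ)
  have hψeq : ψ = fun l => σ ^ 2 / 2 * l ^ 2 +
      ∫ r in Set.Ioi 0, (Real.exp (-l * r) - 1 + l * r) ∂π :=
    funext fun l => by rw [hform l]; ring
  rw [hψeq]; exact h3

lemma psi_zero (hform : ∀ l : ℝ, ψ l = 0 * l + σ ^ 2 / 2 * l ^ 2 +
      ∫ r in Set.Ioi 0, (Real.exp (-l * r) - 1 + l * r) ∂π) : ψ 0 = 0 := by
  rw [hform 0]; simp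

lemma psi_mono (hconv : ConvexOn ℝ (Set.Ici 0) ψ) (h0 : ψ 0 = 0)
    (hψpos : ∀ l > (0 : ℝ), 0 < ψ l) {a b : ℝ} (ha : 0 < a) (hab : a ≤ b) : ψ a ≤ ψ b := by
  rcases eq_or_lt_of_le hab with rfl | hab
  · exact le_rfl
  have hs := hconv.slope_mono_adjacent (Set.self_mem_Ici) (Set.mem_Ici.2 (by linarith)) ha hab
  rw [h0] at hs
  have h1 : 0 < (ψ a - 0) / (a - 0) := by
    rw [sub_zero, sub_zero]
    exact div_pos (hψpos a ha) ha
  have h2 : 0 < (ψ b - ψ a) / (b - a) := lt_of_lt_of_le h1 hs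
  have := (div_pos_iff.1 h2)
  rcases this with ⟨h3, _⟩ | ⟨_, h4⟩
  · linarith
  · linarith

lemma psi_slope (hconv : ConvexOn ℝ (Set.Ici 0) ψ)
    (hψpos : ∀ l > (0 : ℝ), 0 < ψ l) {a b : ℝ} (ha : 0 < a) (hab : a < b) :
    ψ b - ψ a ≤ (b - a) * (ψ (2 * b) / b) := by
  have hb : 0 < b := lt_trans ha hab
  have hs := hconv.slope_mono_adjacent (x := a) (y := b) (z := 2 * b) (Set.mem_Ici.2 ha.le)
    (Set.mem_Ici.2 (by linarith)) hab (by linarith)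
  have hψb := hψpos b hb
  rw [show 2 * b - b = b by ring] at hs
  have h2 : (ψ b - ψ a) / (b - a) ≤ ψ (2 * b) / b := by
    refine hs.trans ?_
    gcongr
    linarith [hψb]
  have h3 := (div_le_iff₀ (by linarith : (0:ℝ) < b - a)).1 h2
  nlinarith [h3]

lemma phi_diff (hψpos : ∀ l > (0 : ℝ), 0 < ψ l)
    (hint : ∀ l > (0 : ℝ), IntegrableOn (fun v => 1 / ψ v) (Set.Ioi l))
    (hφ : ∀ l > (0 : ℝ), φ l = ∫ v in Set.Ioi l, 1 / ψ v)
    {x y : ℝ} (hx : 0 < x) (hxy : x < y) :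
    φ x - φ y = ∫ v in Set.Ioc x y, 1 / ψ v := by
  have hy : 0 < y := lt_trans hx hxy
  have hsplit : Set.Ioc x y ∪ Set.Ioi y = Set.Ioi x := Set.Ioc_union_Ioi_eq_Ioi hxy.le
  have hIoc : IntegrableOn (fun v => 1 / ψ v) (Set.Ioc x y) :=
    (hint x hx).mono_set Set.Ioc_subset_Ioi_self
  have := setIntegral_union (Set.Ioc_disjoint_Ioi le_rfl) measurableSet_Ioi hIoc (hint y hy)
    (f := fun v => 1 / ψ v) (μ := volume)
  rw [hsplit] at this
  rw [hφ x hx, hφ y hy, this]; ring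

lemma phi_bounds (hψpos : ∀ l > (0 : ℝ), 0 < ψ l)
    (hmono : ∀ {a b : ℝ}, 0 < a → a ≤ b → ψ a ≤ ψ b)
    (hint : ∀ l > (0 : ℝ), IntegrableOn (fun v => 1 / ψ v) (Set.Ioi l))
    (hφ : ∀ l > (0 : ℝ), φ l = ∫ v in Set.Ioi l, 1 / ψ v)
    {x y : ℝ} (hx : 0 < x) (hxy : x < y) :
    (y - x) * (1 / ψ y) ≤ φ x - φ y ∧ φ x - φ y ≤ (y - x) * (1 / ψ x) := by
  have hy : 0 < y := lt_trans hx hxy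
  have hIoc : IntegrableOn (fun v => 1 / ψ v) (Set.Ioc x y) :=
    (hint x hx).mono_set Set.Ioc_subset_Ioi_self
  have hconst : ∀ c : ℝ, ∫ _ in Set.Ioc x y, c ∂volume = (y - x) * c := by
    intro c
    rw [setIntegral_const, Real.volume_real_Ioc, max_eq_left (by linarith), smul_eq_mul]
  rw [phi_diff hψpos hint hφ hx hxy]
  constructor
  · rw [← hconst (1 / ψ y)]
    refine setIntegral_mono_on (integrableOn_const ?_) hIoc measurableSet_Ioc ?_
    · rw [Real.volume_Ioc]; exact ENNReal.ofReal_ne_top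
    · intro v hv
      exact one_div_le_one_div_of_le (hψpos v (lt_trans hx hv.1)) (hmono (lt_trans hx hv.1) hv.2)
  · rw [← hconst (1 / ψ x)]
    refine setIntegral_mono_on hIoc (integrableOn_const ?_) measurableSet_Ioc ?_
    · rw [Real.volume_Ioc]; exact ENNReal.ofReal_ne_top
    · intro v hv
      exact one_div_le_one_div_of_le (hψpos x hx) (hmono hx hv.1.le)

end Helpers

/-- In the critical case, `(φ̂(t) − φ̂(t + φ(λ)))/ψ(φ̂(t)) → φ(λ)` as `t → ∞`. -/
theorem stmt5 (σ : ℝ) (π : Measure ℝ) (ψ φ φhat : ℝ → ℝ)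
    (hψ : LevyMechanism 0 σ π ψ)
    (hψpos : ∀ l > (0 : ℝ), 0 < ψ l)
    (hint : ∀ l > (0 : ℝ), IntegrableOn (fun v => 1 / ψ v) (Set.Ioi l))
    (hφ : ∀ l > (0 : ℝ), φ l = ∫ v in Set.Ioi l, 1 / ψ v)
    (hφhat : ∀ t > (0 : ℝ), 0 < φhat t ∧ φ (φhat t) = t) :
    ∀ l > (0 : ℝ),
      Tendsto (fun t => (φhat t - φhat (t + φ l)) / ψ (φhat t)) atTop
        (nhds (φ l)) := by
  intro l hl
  obtain ⟨hσ, hπ, hform⟩ := hψ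
  have hconv := psi_convex hπ hform
  have h0 := psi_zero hform
  have hmono : ∀ {a b : ℝ}, 0 < a → a ≤ b → ψ a ≤ ψ b :=
    fun ha hab => psi_mono hconv h0 hψpos ha hab
  have hφnn : ∀ x > (0:ℝ), 0 ≤ φ x := by
    intro x hx
    rw [hφ x hx]
    exact setIntegral_nonneg measurableSet_Ioi fun v hv =>
      (one_div_nonneg).2 (hψpos v (lt_trans hx hv)).le
  have hφanti : ∀ x y : ℝ, 0 < x → x < y → φ y < φ x := by
    intro x y hx hxy
    have hb := (phi_bounds hψpos hmono hint hφ hx hxy).1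
    have hψy := hψpos y (lt_trans hx hxy)
    have : 0 < (y - x) * (1 / ψ y) := mul_pos (by linarith) (one_div_pos.2 hψy)
    linarith
  have hφanti' : ∀ x y : ℝ, 0 < x → x ≤ y → φ y ≤ φ x := by
    intro x y hx hxy
    rcases eq_or_lt_of_le hxy with rfl | h
    · exact le_rfl
    · exact (hφanti x y hx h).le
  have hs : 0 < φ l := lt_of_le_of_lt (hφnn (l + 1) (by linarith)) (hφanti l (l + 1) hl (by linarith))
  -- φhat tends to 0 from the right
  have hφhat_lt : ∀ ε > (0:ℝ), ∀ᶠ t in atTop, φhat t < ε := by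
    intro ε hε
    filter_upwards [eventually_gt_atTop (max (φ ε) 0)] with t ht
    have ht0 : 0 < t := lt_of_le_of_lt (le_max_right _ _) ht
    obtain ⟨hb0, hbφ⟩ := hφhat t ht0
    by_contra h
    push_neg at h
    have h1 : φ (φhat t) ≤ φ ε := hφanti' ε (φhat t) hε h
    rw [hbφ] at h1
    have h2 := lt_of_le_of_lt (le_max_left (φ ε) 0) ht
    linarith
  have hφhat_tendsto : Tendsto φhat atTop (nhdsWithin 0 (Set.Ioi 0)) := by
    rw [tendsto_nhdsWithin_iff]
    constructor
    · refine tendsto_order.2 ⟨?_, ?_⟩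
      · intro a ha
        filter_upwards [eventually_gt_atTop 0] with t ht
        exact lt_trans ha ((hφhat t ht).1)
      · intro a ha
        exact hφhat_lt a ha
    · filter_upwards [eventually_gt_atTop 0] with t ht
      exact (hφhat t ht).1
  have hlim := psi_div_tendsto hπ hform
  have h2b : Tendsto (fun t => 2 * φhat t) atTop (nhdsWithin 0 (Set.Ioi 0)) := by
    rw [tendsto_nhdsWithin_iff]
    constructor
    · have := (hφhat_tendsto.mono_right nhdsWithin_le_nhds).const_mul 2
      simpa using this
    · filter_upwards [eventually_gt_atTop 0] with t ht
      have := (hφhat t ht).1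
      exact Set.mem_Ioi.2 (by linarith)
  have hcomp := hlim.comp h2b
  have hE : Tendsto (fun t => ψ (2 * φhat t) / φhat t) atTop (nhds 0) := by
    have h2 : Tendsto (fun t => 2 * (ψ (2 * φhat t) / (2 * φhat t))) atTop (nhds 0) := by
      simpa using hcomp.const_mul 2
    refine h2.congr' ?_
    filter_upwards [eventually_gt_atTop 0] with t ht
    have hb0 := (hφhat t ht).1
    have : φhat t ≠ 0 := ne_of_gt hb0
    field_simp
  -- squeeze
  have hg : Tendsto (fun t => φ l - (φ l) ^ 2 * (ψ (2 * φhat t) / φhat t)) atTop (nhds (φ l)) := by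
    have := (tendsto_const_nhds (x := φ l) (f := atTop)).sub (hE.const_mul ((φ l) ^ 2))
    simpa using this
  refine tendsto_of_tendsto_of_tendsto_of_le_of_le' hg tendsto_const_nhds ?_ ?_
  · -- lower bound
    filter_upwards [eventually_gt_atTop 0] with t ht
    obtain ⟨hb0, hbφ⟩ := hφhat t ht
    have hts : 0 < t + φ l := by linarith
    obtain ⟨ha0, haφ⟩ := hφhat (t + φ l) hts
    have hab : φhat (t + φ l) < φhat t := by
      by_contra h
      push_neg at h
      have := hφanti' (φhat t) (φhat (t + φ l)) hb0 h
      rw [haφ, hbφ] at this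
      linarith
    obtain ⟨hlow, hhigh⟩ := phi_bounds hψpos hmono hint hφ ha0 hab
    rw [haφ, hbφ] at hlow hhigh
    have hψb := hψpos _ hb0
    have hψa := hψpos _ ha0
    have hψ2b := hψpos (2 * φhat t) (by linarith)
    have h1 : φ l * ψ (φhat (t + φ l)) ≤ φhat t - φhat (t + φ l) := by
      rw [mul_one_div] at hhigh
      exact (le_div_iff₀ hψa).1 (by linarith)
    have h2 : φhat t - φhat (t + φ l) ≤ φ l * ψ (φhat t) := by
      rw [mul_one_div] at hlow
      have := (div_le_iff₀ hψb).1 (by linarith : (φhat t - φhat (t + φ l)) / ψ (φhat t) ≤ φ l)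
      linarith
    have h3 := psi_slope hconv hψpos ha0 hab
    have hE0 : 0 ≤ ψ (2 * φhat t) / φhat t := div_nonneg hψ2b.le hb0.le
    rw [le_div_iff₀ hψb]
    nlinarith [mul_le_mul_of_nonneg_left h3 hs.le,
      mul_le_mul_of_nonneg_left h2 (mul_nonneg hs.le hE0), h1]
  · -- upper bound
    filter_upwards [eventually_gt_atTop 0] with t ht
    obtain ⟨hb0, hbφ⟩ := hφhat t ht
    have hts : 0 < t + φ l := by linarith
    obtain ⟨ha0, haφ⟩ := hφhat (t + φ l) hts
    have hab : φhat (t + φ l) < φhat t := by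
      by_contra h
      push_neg at h
      have := hφanti' (φhat t) (φhat (t + φ l)) hb0 h
      rw [haφ, hbφ] at this
      linarith
    obtain ⟨hlow, hhigh⟩ := phi_bounds hψpos hmono hint hφ ha0 hab
    rw [haφ, hbφ] at hlow
    have hψb := hψpos _ hb0
    rw [mul_one_div] at hlow
    linarith
end

section
/- Let ψ be a (sub)critical branching mechanism satisfying ∫^∞ 1/ψ < ∞, φ with inverse φ̂, α = ψ'(0+) ≥ 0. Then for every q > 0 and λ > 0, lim_{t→∞} e^{-x(φ̂(t−q+φ(λ+φ̂(q))) − φ̂(t))} · ψ(φ̂(t−q+φ(λ+φ̂(q))))/ψ(φ̂(t)) · ψ(φ̂(q))/ψ(λ+φ̂(q)) = e^{−α(φ(λ+φ̂(q)) − q)} ψ(φ̂(q))/ψ(λ+φ̂(q)). -/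
open MeasureTheory Set Filter

lemma eineq1 {y : ℝ} (hy : 0 ≤ y) : 0 ≤ Real.exp (-y) - 1 + y := by
  have := Real.add_one_le_exp (-y); linarith

lemma eineq2 {y : ℝ} (hy : 0 ≤ y) : Real.exp (-y) - 1 + y ≤ y := by
  have : Real.exp (-y) ≤ 1 := Real.exp_le_one_iff.2 (by linarith)
  linarith

lemma eineq3 {y : ℝ} (hy : 0 ≤ y) : Real.exp (-y) - 1 + y ≤ y ^ 2 := by
  rcases le_or_gt y 1 with h | h
  · have h2 : |(-y)| ≤ 1 := by rw [abs_neg, abs_of_nonneg hy]; exact h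
    have := Real.abs_exp_sub_one_sub_id_le h2
    have h3 : Real.exp (-y) - 1 - (-y) ≤ (-y) ^ 2 := (abs_le.1 this).2
    nlinarith
  · have := eineq2 hy
    nlinarith

lemma eineq4 {y : ℝ} (hy : 0 ≤ y) : 1 - Real.exp (-y) ≤ y := by
  have := Real.add_one_le_exp (-y); linarith

lemma eineq5 (y : ℝ) : 1 - Real.exp (-y) ≤ 1 := by
  have := Real.exp_pos (-y); linarith

lemma deriv_bound {x c r : ℝ} (hx : 0 < x) (hxc : x ≤ c) (hr : 0 < r) :
    r * (1 - Real.exp (-x * r)) ≤ (1 + c) * min r (r ^ 2) := by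
  rw [neg_mul]
  have hxr : 0 ≤ x * r := by positivity
  have hc : 0 < c := lt_of_lt_of_le hx hxc
  rcases le_total r 1 with h | h
  · have hmin : min r (r ^ 2) = r ^ 2 := min_eq_right (by nlinarith)
    have := eineq4 hxr
    rw [hmin]; nlinarith
  · have hmin : min r (r ^ 2) = r := min_eq_left (by nlinarith)
    have := eineq5 (x * r)
    rw [hmin]; nlinarith

lemma deriv_bound0 {x r : ℝ} (hx : 0 < x) (hx1 : x ≤ 1) (hr : 0 < r) :
    r * (1 - Real.exp (-x * r)) ≤ min r (r ^ 2) := by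
  rw [neg_mul]
  have hxr : 0 ≤ x * r := by positivity
  refine le_min ?_ ?_
  · have := eineq5 (x * r); nlinarith
  · have := eineq4 hxr; nlinarith

lemma deriv_nonneg {x r : ℝ} (hx : 0 ≤ x) (hr : 0 ≤ r) :
    0 ≤ r * (1 - Real.exp (-x * r)) := by
  rw [neg_mul]
  have : Real.exp (-(x*r)) ≤ 1 := Real.exp_le_one_iff.2 (by nlinarith)
  nlinarith

lemma F_nonneg {x r : ℝ} (hx : 0 ≤ x) (hr : 0 ≤ r) :
    0 ≤ Real.exp (-x * r) - 1 + x * r := by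
  rw [neg_mul]; exact eineq1 (by positivity)

lemma F_bound {x r : ℝ} (hx : 0 ≤ x) (hr : 0 < r) :
    Real.exp (-x * r) - 1 + x * r ≤ (x + x ^ 2) * min r (r ^ 2) := by
  rw [neg_mul]
  have hxr : 0 ≤ x * r := by positivity
  rcases le_total r 1 with h | h
  · have hmin : min r (r ^ 2) = r ^ 2 := min_eq_right (by nlinarith)
    have := eineq3 hxr
    rw [hmin]; nlinarith
  · have hmin : min r (r ^ 2) = r := min_eq_left (by nlinarith)
    have := eineq2 hxr
    rw [hmin]; nlinarith

noncomputable def Gfun (π : Measure ℝ) (x : ℝ) : ℝ :=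
  ∫ r in Set.Ioi (0:ℝ), r * (1 - Real.exp (-x * r)) ∂π

lemma G_hasDerivAt (π : Measure ℝ)
    (hπ : Integrable (fun r => min r (r ^ 2)) (π.restrict (Set.Ioi 0)))
    {l : ℝ} (hl : 0 < l) :
    HasDerivAt (fun x => ∫ r in Set.Ioi (0:ℝ), (Real.exp (-x * r) - 1 + x * r) ∂π)
      (Gfun π l) l := by
  have key := hasDerivAt_integral_of_dominated_loc_of_deriv_le
    (μ := π.restrict (Set.Ioi 0)) (x₀ := l)
    (F := fun x r => Real.exp (-x * r) - 1 + x * r)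
    (F' := fun x r => r * (1 - Real.exp (-x * r)))
    (bound := fun r => (1 + 2 * l) * min r (r ^ 2))
    (Metric.ball_mem_nhds l (half_pos hl))
    (Eventually.of_forall fun x =>
      (Continuous.aestronglyMeasurable (by fun_prop)))
    ?hF_int
    (Continuous.aestronglyMeasurable (by fun_prop))
    ?h_bound
    (hπ.const_mul _)
    ?h_diff
  · exact key.2
  case hF_int =>
    refine (hπ.const_mul (l + l ^ 2)).mono'
      (Continuous.aestronglyMeasurable (by fun_prop)) ?_
    filter_upwards [ae_restrict_mem measurableSet_Ioi] with r hr
    rw [Real.norm_eq_abs, abs_of_nonneg (F_nonneg hl.le (le_of_lt hr))]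
    exact F_bound hl.le hr
  case h_bound =>
    filter_upwards [ae_restrict_mem measurableSet_Ioi] with r hr
    intro x hx
    rw [Metric.mem_ball, Real.dist_eq, abs_lt] at hx
    have hx0 : 0 < x := by linarith
    rw [Real.norm_eq_abs, abs_of_nonneg (deriv_nonneg hx0.le (le_of_lt hr))]
    exact deriv_bound hx0 (by linarith : x ≤ 2 * l) hr
  case h_diff =>
    refine Eventually.of_forall fun r => fun x _ => ?_
    have h1 : HasDerivAt (fun x : ℝ => -x * r) (-1 * r) x :=
      (hasDerivAt_id x).neg.mul_const r
    have h2 := (h1.exp.sub_const 1).add ((hasDerivAt_id x).mul_const r)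
    convert h2 using 1
    · rfl
    ring

lemma G_contAt (π : Measure ℝ)
    (hπ : Integrable (fun r => min r (r ^ 2)) (π.restrict (Set.Ioi 0)))
    {l : ℝ} (hl : 0 < l) : ContinuousAt (Gfun π) l := by
  refine continuousAt_of_dominated (bound := fun r => (1 + 2 * l) * min r (r ^ 2))
    (Eventually.of_forall fun x => (Continuous.aestronglyMeasurable (by fun_prop)))
    ?_ (hπ.const_mul _) ?_
  · filter_upwards [Metric.ball_mem_nhds l (half_pos hl)] with x hx
    rw [Metric.mem_ball, Real.dist_eq, abs_lt] at hx
    have hx0 : 0 < x := by linarith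
    filter_upwards [ae_restrict_mem measurableSet_Ioi] with r hr
    rw [Real.norm_eq_abs, abs_of_nonneg (deriv_nonneg hx0.le (le_of_lt hr))]
    exact deriv_bound hx0 (by linarith : x ≤ 2 * l) hr
  · exact Eventually.of_forall fun r =>
      Continuous.continuousAt (by fun_prop)

lemma G_tendsto (π : Measure ℝ)
    (hπ : Integrable (fun r => min r (r ^ 2)) (π.restrict (Set.Ioi 0))) :
    Tendsto (Gfun π) (nhdsWithin (0:ℝ) (Set.Ioi 0)) (nhds 0) := by
  have := tendsto_integral_filter_of_dominated_convergence
    (μ := π.restrict (Set.Ioi 0)) (l := nhdsWithin (0:ℝ) (Set.Ioi 0))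
    (F := fun x r => r * (1 - Real.exp (-x * r)))
    (f := fun _ => (0:ℝ))
    (bound := fun r => min r (r ^ 2))
    (Eventually.of_forall fun x => (Continuous.aestronglyMeasurable (by fun_prop)))
    ?_ hπ ?_
  · simp only [integral_zero] at this
    unfold Gfun
    simp only [neg_mul] at this ⊢
    exact this
  · filter_upwards [Ioc_mem_nhdsGT_of_mem (by constructor <;> norm_num : (0:ℝ) ∈ Set.Ico (0:ℝ) 1)] with x hx
    filter_upwards [ae_restrict_mem measurableSet_Ioi] with r hr
    rw [Real.norm_eq_abs, abs_of_nonneg (deriv_nonneg hx.1.le (le_of_lt hr))]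
    exact deriv_bound0 hx.1 hx.2 hr
  · refine Eventually.of_forall fun r => ?_
    have : Tendsto (fun x : ℝ => r * (1 - Real.exp (-x * r))) (nhds 0)
        (nhds (r * (1 - Real.exp (-(0:ℝ) * r)))) :=
      Continuous.tendsto (by fun_prop) 0
    simpa using this.mono_left nhdsWithin_le_nhds

lemma G_nonneg (π : Measure ℝ) {l : ℝ} (hl : 0 ≤ l) : 0 ≤ Gfun π l := by
  refine integral_nonneg_of_ae ?_
  filter_upwards [ae_restrict_mem measurableSet_Ioi] with r hr
  exact deriv_nonneg hl (le_of_lt hr)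

noncomputable def Dfun (α σ : ℝ) (π : Measure ℝ) (x : ℝ) : ℝ :=
  α + σ ^ 2 * x + Gfun π x


lemma psi_hasDerivAt {α σ : ℝ} {π : Measure ℝ} {ψ : ℝ → ℝ} (hψ : LevyMechanism α σ π ψ)
    {l : ℝ} (hl : 0 < l) : HasDerivAt ψ (Dfun α σ π l) l := by
  have hG := G_hasDerivAt π hψ.2.1 hl
  have ha : HasDerivAt (fun x : ℝ => α * x) α l := by
    simpa using (hasDerivAt_id l).const_mul α
  have hb : HasDerivAt (fun x : ℝ => σ ^ 2 / 2 * x ^ 2) (σ ^ 2 * l) l := by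
    have := (hasDerivAt_pow 2 l).const_mul (σ ^ 2 / 2)
    refine this.congr_deriv ?_
    rw [show (2:ℕ) - 1 = 1 from rfl]; push_cast; ring
  have h1 := (ha.add hb).add hG
  have hfe : ψ = fun x => α * x + σ ^ 2 / 2 * x ^ 2 +
      ∫ r in Set.Ioi (0:ℝ), (Real.exp (-x * r) - 1 + x * r) ∂π := funext hψ.2.2
  rw [hfe]
  exact h1

lemma D_contAt {α σ : ℝ} {π : Measure ℝ}
    (hπ : Integrable (fun r => min r (r ^ 2)) (π.restrict (Set.Ioi 0)))
    {l : ℝ} (hl : 0 < l) : ContinuousAt (Dfun α σ π) l := by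
  exact (continuousAt_const.add ((continuous_const.mul continuous_id).continuousAt)).add
    (G_contAt π hπ hl)

lemma D_ge {α σ : ℝ} {π : Measure ℝ} {l : ℝ} (hl : 0 ≤ l) : α ≤ Dfun α σ π l := by
  have h1 := G_nonneg π (l := l) hl
  have h2 : 0 ≤ σ ^ 2 * l := by positivity
  simp only [Dfun]; linarith

lemma D_tendsto {α σ : ℝ} {π : Measure ℝ}
    (hπ : Integrable (fun r => min r (r ^ 2)) (π.restrict (Set.Ioi 0))) :
    Tendsto (Dfun α σ π) (nhdsWithin (0:ℝ) (Set.Ioi 0)) (nhds α) := by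
  have h1 : Tendsto (fun x : ℝ => α + σ ^ 2 * x) (nhdsWithin (0:ℝ) (Set.Ioi 0))
      (nhds (α + σ ^ 2 * 0)) :=
    ((continuous_const.add (continuous_const.mul continuous_id)).tendsto 0).mono_left
      nhdsWithin_le_nhds
  have := h1.add (G_tendsto π hπ)
  show Tendsto (fun x => α + σ ^ 2 * x + Gfun π x) _ _
  simpa using this


section phi
variable {ψ φ : ℝ → ℝ}
  (hψpos : ∀ l > (0 : ℝ), 0 < ψ l)
  (hint : ∀ l > (0 : ℝ), IntegrableOn (fun v => 1 / ψ v) (Set.Ioi l))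
  (hφ : ∀ l > (0 : ℝ), φ l = ∫ v in Set.Ioi l, 1 / ψ v)

include hint in
lemma inv_psi_II {a b : ℝ} (ha : 0 < a) (hab : a ≤ b) :
    IntervalIntegrable (fun v => 1 / ψ v) volume a b :=
  (intervalIntegrable_iff_integrableOn_Ioc_of_le hab).2
    ((hint a ha).mono_set Set.Ioc_subset_Ioi_self)

include hint hφ in
lemma phi_split {a b : ℝ} (ha : 0 < a) (hab : a ≤ b) :
    φ a = (∫ v in a..b, 1 / ψ v) + φ b := by
  have hb : 0 < b := lt_of_lt_of_le ha hab
  rw [hφ a ha, hφ b hb, intervalIntegral.integral_of_le hab,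
    ← setIntegral_union (Set.Ioc_disjoint_Ioi le_rfl) measurableSet_Ioi
      ((hint a ha).mono_set Set.Ioc_subset_Ioi_self) (hint b hb),
    Set.Ioc_union_Ioi_eq_Ioi hab]

include hψpos hint in
lemma interval_pos {a b : ℝ} (ha : 0 < a) (hab : a < b) :
    0 < ∫ v in a..b, 1 / ψ v :=
  intervalIntegral.intervalIntegral_pos_of_pos_on (inv_psi_II hint ha hab.le)
    (fun x hx => one_div_pos.2 (hψpos x (lt_trans ha hx.1))) hab

include hψpos hint hφ in
lemma phi_anti {a b : ℝ} (ha : 0 < a) (hab : a ≤ b) : φ b ≤ φ a := by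
  have h := phi_split hint hφ ha hab
  have h2 : 0 ≤ ∫ v in a..b, 1 / ψ v := by
    refine intervalIntegral.integral_nonneg hab fun u hu => ?_
    have : 0 < ψ u := hψpos u (lt_of_lt_of_le ha hu.1)
    positivity
  linarith

include hψpos hint hφ in
lemma phi_pos {a : ℝ} (ha : 0 < a) : 0 < φ a := by
  have h := phi_split hint hφ ha (by linarith : a ≤ a + 1)
  have h1 : 0 < ∫ v in a..(a+1), 1 / ψ v := interval_pos hψpos hint ha (by linarith)
  have h2 : 0 ≤ φ (a + 1) := by
    rw [hφ (a+1) (by linarith)]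
    refine setIntegral_nonneg measurableSet_Ioi fun v hv => ?_
    have : 0 < ψ v := hψpos v (by simp at hv; linarith)
    positivity
  linarith

end phi

/-- (Sub)critical case: the Laplace functional of `Z_{t−q}` conditioned on
`{ζ = t}` converges as `t → ∞` to
`e^{−α(φ(λ+φ̂(q))−q)} ψ(φ̂(q))/ψ(λ+φ̂(q))`. -/
theorem stmt15 (α σ : ℝ) (π : Measure ℝ) (ψ φ φhat : ℝ → ℝ)
    (hα : 0 ≤ α)
    (hψ : LevyMechanism α σ π ψ)
    (hψpos : ∀ l > (0 : ℝ), 0 < ψ l)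
    (hint : ∀ l > (0 : ℝ), IntegrableOn (fun v => 1 / ψ v) (Set.Ioi l))
    (hφ : ∀ l > (0 : ℝ), φ l = ∫ v in Set.Ioi l, 1 / ψ v)
    (hφhat : ∀ t > (0 : ℝ), 0 < φhat t ∧ φ (φhat t) = t) :
    ∀ x > (0 : ℝ), ∀ q > (0 : ℝ), ∀ l > (0 : ℝ),
      Tendsto (fun t =>
          Real.exp (-x * (φhat (t - q + φ (l + φhat q)) - φhat t)) *
            (ψ (φhat (t - q + φ (l + φhat q))) / ψ (φhat t)) *
            (ψ (φhat q) / ψ (l + φhat q)))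
        atTop
        (nhds (Real.exp (-α * (φ (l + φhat q) - q)) * (ψ (φhat q) / ψ (l + φhat q)))) := by
  intro x hx q hq l hl
  obtain ⟨hq0, hqe⟩ := hφhat q hq
  have hπ := hψ.2.1
  have hlq0 : (0:ℝ) < l + φhat q := by linarith
  have hs_eq : φ (φhat q) = (∫ v in (φhat q)..(l + φhat q), 1 / ψ v) + φ (l + φhat q) :=
    phi_split hint hφ hq0 (by linarith)
  have hI0pos : 0 < ∫ v in (φhat q)..(l + φhat q), 1 / ψ v :=
    interval_pos hψpos hint hq0 (by linarith)
  set C := ψ (φhat q) / ψ (l + φhat q) with hC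
  set s := φ (l + φhat q) - q with hs
  have hs_neg : s < 0 := by rw [hqe] at hs_eq; rw [hs]; linarith
  have hsp : 0 < -s := by linarith
  -- φhat tends to 0 along atTop
  have hsmall : ∀ ε > (0:ℝ), ∀ᶠ t in atTop, 0 < φhat t ∧ φhat t < ε := by
    intro ε hε
    rw [eventually_atTop]
    refine ⟨max (φ ε + 1) 1, fun t ht => ?_⟩
    have ht1 : (1:ℝ) ≤ t := le_trans (le_max_right _ _) ht
    obtain ⟨hp, he⟩ := hφhat t (by linarith)
    refine ⟨hp, ?_⟩
    by_contra hcon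
    push_neg at hcon
    have h1 : φ (φhat t) ≤ φ ε := phi_anti hψpos hint hφ hε hcon
    rw [he] at h1
    have h2 : φ ε + 1 ≤ t := le_trans (le_max_left _ _) ht
    linarith
  have harg_eq : ∀ t : ℝ, t - q + φ (l + φhat q) = t + s := by
    intro t; rw [hs]; ring
  have hshift : ∀ ε > (0:ℝ), ∀ᶠ t in atTop,
      0 < φhat (t - q + φ (l + φhat q)) ∧ φhat (t - q + φ (l + φhat q)) < ε := by
    intro ε hε
    obtain ⟨N, hN⟩ := eventually_atTop.mp (hsmall ε hε)
    rw [eventually_atTop]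
    refine ⟨N - s, fun t ht => ?_⟩
    rw [harg_eq t]
    exact hN (t + s) (by linarith)
  -- tendsto 0 versions
  have hu_tend : Tendsto φhat atTop (nhds 0) := by
    rw [Metric.tendsto_atTop]
    intro ε hε
    obtain ⟨N, hN⟩ := eventually_atTop.mp (hsmall ε hε)
    exact ⟨N, fun t ht => by
      rw [Real.dist_eq, sub_zero, abs_of_pos (hN t ht).1]; exact (hN t ht).2⟩
  have hv_tend : Tendsto (fun t => φhat (t - q + φ (l + φhat q))) atTop (nhds 0) := by
    rw [Metric.tendsto_atTop]
    intro ε hε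
    obtain ⟨N, hN⟩ := eventually_atTop.mp (hshift ε hε)
    exact ⟨N, fun t ht => by
      rw [Real.dist_eq, sub_zero, abs_of_pos (hN t ht).1]; exact (hN t ht).2⟩
  -- the log-difference limit
  have hΔ : Tendsto (fun t => Real.log (ψ (φhat (t - q + φ (l + φhat q)))) -
      Real.log (ψ (φhat t))) atTop (nhds (-α * s)) := by
    rw [Metric.tendsto_atTop]
    intro ε hε
    have hε' : 0 < ε / (2 * (-s)) := by positivity
    set ε' := ε / (2 * (-s)) with hε'def
    have hsne : s ≠ 0 := ne_of_lt hs_neg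
    have hεs : ε' * (-s) = ε / 2 := by
      rw [hε'def]; field_simp
    have hDev : ∀ᶠ w in nhdsWithin (0:ℝ) (Set.Ioi 0), Dfun α σ π w < α + ε' :=
      (D_tendsto hπ).eventually_lt_const (by linarith)
    rw [eventually_nhdsWithin_iff, Metric.eventually_nhds_iff] at hDev
    obtain ⟨δ, hδpos, hδ⟩ := hDev
    have hev := ((hsmall δ hδpos).and (hshift δ hδpos)).and (eventually_ge_atTop (max 1 (1 - s)))
    obtain ⟨N, hN⟩ := eventually_atTop.mp hev
    refine ⟨N, fun t ht => ?_⟩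
    obtain ⟨⟨⟨hu0, huδ⟩, ⟨hv0, hvδ⟩⟩, htN⟩ := hN t ht
    have ht1 : (1:ℝ) ≤ t := le_trans (le_max_left _ _) htN
    have hts : 0 < t + s := by
      have := le_trans (le_max_right _ _) htN; linarith
    set u := φhat t with hu
    set v := φhat (t - q + φ (l + φhat q)) with hv
    have hue : φ u = t := (hφhat t (by linarith)).2
    have hve : φ v = t + s := by
      rw [hv, harg_eq t]; exact (hφhat (t + s) hts).2
    have huv : u ≤ v := by
      by_contra hcon
      push_neg at hcon
      have := phi_anti hψpos hint hφ hv0 hcon.le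
      rw [hue, hve] at this; linarith
    have hIval : ∫ w in u..v, 1 / ψ w = -s := by
      have := phi_split hint hφ hu0 huv
      rw [hue, hve] at this; linarith
    -- FTC
    have hderiv : ∀ w ∈ Set.uIcc u v, HasDerivAt (fun y => Real.log (ψ y))
        (Dfun α σ π w / ψ w) w := by
      intro w hw
      rw [Set.uIcc_of_le huv] at hw
      have hw0 : 0 < w := lt_of_lt_of_le hu0 hw.1
      exact (psi_hasDerivAt hψ hw0).log (ne_of_gt (hψpos w hw0))
    have hii : IntervalIntegrable (fun w => Dfun α σ π w / ψ w) volume u v := by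
      apply ContinuousOn.intervalIntegrable
      refine ContinuousOn.div ?_ ?_ ?_
      · intro w hw
        rw [Set.uIcc_of_le huv] at hw
        exact (D_contAt hπ (lt_of_lt_of_le hu0 hw.1)).continuousWithinAt
      · intro w hw
        rw [Set.uIcc_of_le huv] at hw
        exact ((psi_hasDerivAt hψ
          (lt_of_lt_of_le hu0 hw.1)).differentiableAt.continuousAt).continuousWithinAt
      · intro w hw
        rw [Set.uIcc_of_le huv] at hw
        exact ne_of_gt (hψpos w (lt_of_lt_of_le hu0 hw.1))
    have hftc : ∫ w in u..v, Dfun α σ π w / ψ w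
        = Real.log (ψ v) - Real.log (ψ u) :=
      intervalIntegral.integral_eq_sub_of_hasDerivAt hderiv hii
    have hii1 : IntervalIntegrable (fun w => 1 / ψ w) volume u v :=
      inv_psi_II hint hu0 huv
    -- upper bound
    have hub : (∫ w in u..v, Dfun α σ π w / ψ w)
        ≤ ∫ w in u..v, (α + ε') * (1 / ψ w) := by
      refine intervalIntegral.integral_mono_on huv hii (hii1.const_mul _) fun w hw => ?_
      have hw0 : 0 < w := lt_of_lt_of_le hu0 hw.1
      have hψw : 0 < ψ w := hψpos w hw0
      have hDw : Dfun α σ π w < α + ε' := by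
        refine hδ ?_ hw0
        rw [Real.dist_eq, sub_zero, abs_of_pos hw0]
        exact lt_of_le_of_lt hw.2 hvδ
      rw [div_eq_mul_one_div (Dfun α σ π w) (ψ w)]
      exact mul_le_mul_of_nonneg_right hDw.le (by positivity)
    have hlb : (∫ w in u..v, α * (1 / ψ w))
        ≤ ∫ w in u..v, Dfun α σ π w / ψ w := by
      refine intervalIntegral.integral_mono_on huv (hii1.const_mul _) hii fun w hw => ?_
      have hw0 : 0 < w := lt_of_lt_of_le hu0 hw.1
      have hψw : 0 < ψ w := hψpos w hw0
      rw [div_eq_mul_one_div (Dfun α σ π w) (ψ w)]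
      exact mul_le_mul_of_nonneg_right (D_ge hw0.le) (by positivity)
    rw [intervalIntegral.integral_const_mul, hIval] at hub hlb
    rw [Real.dist_eq]
    have habs : |Real.log (ψ v) - Real.log (ψ u) - (-α * s)| ≤ ε / 2 := by
      rw [abs_le]
      constructor <;> nlinarith [hftc, hub, hlb]
    exact lt_of_le_of_lt habs (by linarith)
  -- assemble
  have hratio : ∀ᶠ t in atTop,
      Real.exp (Real.log (ψ (φhat (t - q + φ (l + φhat q)))) - Real.log (ψ (φhat t)))
        = ψ (φhat (t - q + φ (l + φhat q))) / ψ (φhat t) := by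
    filter_upwards [hsmall 1 one_pos, hshift 1 one_pos] with t h1 h2
    rw [Real.exp_sub, Real.exp_log (hψpos _ h2.1), Real.exp_log (hψpos _ h1.1)]
  have h2 : Tendsto (fun t => ψ (φhat (t - q + φ (l + φhat q))) / ψ (φhat t)) atTop
      (nhds (Real.exp (-α * s))) :=
    (((Real.continuous_exp.tendsto _).comp hΔ)).congr' hratio
  have hC1 : Tendsto (fun t => φhat (t - q + φ (l + φhat q)) - φhat t) atTop (nhds 0) := by
    simpa using hv_tend.sub hu_tend
  have h1 : Tendsto (fun t => Real.exp (-x * (φhat (t - q + φ (l + φhat q)) - φhat t)))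
      atTop (nhds 1) := by
    have := (Real.continuous_exp.tendsto _).comp (hC1.const_mul (-x))
    simpa [Function.comp_def] using this
  have := (h1.mul h2).mul_const C
  rw [one_mul] at this
  exact this
end
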